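/- Let μ be a finite Borel measure on the interval (0,∞), let ψ(t) = ∫_{(0,∞)} exp(−t·x) dμ(x) for t > 0, let n ∈ ℕ, m ≥ 1, c > 0, a ≤ b real numbers, and let h₁, …, h_m : [a,b] → [0,∞) be continuously differentiable. Then the iterated integral over the box [a,b]^m satisfies ∫_a^b ⋯ ∫_a^b ψ⁽ⁿ⁺ᵐ⁾(c + h₁(t₁) + ⋯ + h_m(t_m)) · h₁′(t₁)⋯h_m′(t_m) dt₁ ⋯ dt_m = ∫_{(0,∞)} (−x)ⁿ exp(−c·x) · ∏_{k=1}^m ( exp(−x·h_k(b)) − exp(−x·h_k(a)) ) dμ(x). -/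

import Mathlib

open MeasureTheory Set

private lemma aux_pow_mul_exp_le (j : ℕ) {s x : ℝ} (hs : 0 < s) (hx : 0 ≤ x) :
    x ^ j * Real.exp (-(s * x)) ≤ (Nat.factorial j : ℝ) / s ^ j := by
  have h1 : (s * x) ^ j / (Nat.factorial j : ℝ) ≤ Real.exp (s * x) := by
    calc (s * x) ^ j / (Nat.factorial j : ℝ) ≤ ∑ i ∈ Finset.range (j + 1), (s * x) ^ i / (Nat.factorial i : ℝ) :=
          Finset.single_le_sum (f := fun i => (s * x) ^ i / (Nat.factorial i : ℝ))
            (fun i _ => by positivity) (Finset.self_mem_range_succ j)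
      _ ≤ Real.exp (s * x) := Real.sum_le_exp_of_nonneg (by positivity) _
  have hfac : (0:ℝ) < (Nat.factorial j : ℝ) := by positivity
  have h2 : (s * x) ^ j ≤ (Nat.factorial j : ℝ) * Real.exp (s * x) := by
    rw [div_le_iff₀ hfac] at h1; linarith [h1]
  have h3 : (s * x) ^ j * Real.exp (-(s * x)) ≤ (Nat.factorial j : ℝ) := by
    have := mul_le_mul_of_nonneg_right h2 (Real.exp_nonneg (-(s * x)))
    rwa [mul_assoc, ← Real.exp_add, add_neg_cancel, Real.exp_zero, mul_one] at this
  have hsj : (0:ℝ) < s ^ j := by positivity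
  rw [le_div_iff₀ hsj]
  calc x ^ j * Real.exp (-(s * x)) * s ^ j
      = (s * x) ^ j * Real.exp (-(s * x)) := by rw [mul_pow]; ring
    _ ≤ (Nat.factorial j : ℝ) := h3

private lemma aux_integrable (μ : Measure ℝ) [IsFiniteMeasure μ] (j : ℕ) {s : ℝ} (hs : 0 < s) :
    Integrable (fun x => (-x) ^ j * Real.exp (-s * x)) (μ.restrict (Ioi 0)) := by
  refine Integrable.mono' (integrable_const ((Nat.factorial j : ℝ) / s ^ j))
    ?_ ?_
  · exact (Continuous.mul (by fun_prop) (by fun_prop)).aestronglyMeasurable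
  · filter_upwards [ae_restrict_mem measurableSet_Ioi] with x hx
    have hx0 : (0:ℝ) ≤ x := le_of_lt hx
    have : ‖(-x) ^ j * Real.exp (-s * x)‖ = x ^ j * Real.exp (-(s * x)) := by
      rw [norm_mul, norm_pow, norm_neg, Real.norm_eq_abs, Real.norm_eq_abs,
        abs_of_nonneg hx0, abs_of_nonneg (Real.exp_nonneg _), neg_mul]
    rw [this]
    exact aux_pow_mul_exp_le j hs hx0

private lemma aux_hasDerivAt (μ : Measure ℝ) [IsFiniteMeasure μ] (j : ℕ) {s : ℝ} (hs : 0 < s) :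
    HasDerivAt (fun u => ∫ x in Ioi (0:ℝ), (-x) ^ j * Real.exp (-u * x) ∂μ)
      (∫ x in Ioi (0:ℝ), (-x) ^ (j + 1) * Real.exp (-s * x) ∂μ) s := by
  have hs2 : 0 < s / 2 := by linarith
  refine (hasDerivAt_integral_of_dominated_loc_of_deriv_le (s := Metric.ball s (s / 2)) (Metric.ball_mem_nhds s hs2)
    (F := fun u x => (-x) ^ j * Real.exp (-u * x))
    (F' := fun u x => (-x) ^ (j + 1) * Real.exp (-u * x))
    (bound := fun _ => (Nat.factorial (j + 1) : ℝ) / (s / 2) ^ (j + 1))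
    ?_ ?_ ?_ ?_ ?_ ?_).2
  · filter_upwards with u
    exact (Continuous.mul (by fun_prop) (by fun_prop)).aestronglyMeasurable
  · exact aux_integrable μ j hs
  · exact (Continuous.mul (by fun_prop) (by fun_prop)).aestronglyMeasurable
  · filter_upwards [ae_restrict_mem measurableSet_Ioi] with x hx u hu
    have hx0 : (0:ℝ) ≤ x := le_of_lt hx
    have hus : s / 2 ≤ u := by
      have := abs_lt.1 (by simpa [Real.dist_eq] using hu)
      linarith [this.1]
    have h1 : ‖(-x) ^ (j + 1) * Real.exp (-u * x)‖ = x ^ (j + 1) * Real.exp (-(u * x)) := by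
      rw [norm_mul, norm_pow, norm_neg, Real.norm_eq_abs, Real.norm_eq_abs,
        abs_of_nonneg hx0, abs_of_nonneg (Real.exp_nonneg _), neg_mul]
    rw [h1]
    calc x ^ (j + 1) * Real.exp (-(u * x))
        ≤ x ^ (j + 1) * Real.exp (-(s / 2 * x)) := by
          apply mul_le_mul_of_nonneg_left _ (by positivity)
          exact Real.exp_le_exp.2 (by nlinarith)
      _ ≤ (Nat.factorial (j + 1) : ℝ) / (s / 2) ^ (j + 1) := aux_pow_mul_exp_le _ hs2 hx0
  · exact integrable_const _
  · filter_upwards with x u _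
    have h1 : HasDerivAt (fun u : ℝ => -u * x) (-x) u := by
      simpa using ((hasDerivAt_id u).neg.mul_const x)
    have h2 : HasDerivAt (fun u : ℝ => Real.exp (-u * x)) (Real.exp (-u * x) * (-x)) u := h1.exp
    have := h2.const_mul ((-x) ^ j)
    exact this.congr_deriv (by ring)

private lemma aux_iteratedDeriv (μ : Measure ℝ) [IsFiniteMeasure μ]
    (ψ : ℝ → ℝ) (hψ : ∀ t : ℝ, ψ t = ∫ x in Ioi (0:ℝ), Real.exp (-t * x) ∂μ)
    (j : ℕ) : ∀ s : ℝ, 0 < s →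
    iteratedDeriv j ψ s = ∫ x in Ioi (0:ℝ), (-x) ^ j * Real.exp (-s * x) ∂μ := by
  induction j with
  | zero => intro s hs; simp [iteratedDeriv_zero, hψ s]
  | succ j ih =>
    intro s hs
    rw [iteratedDeriv_succ]
    have heq : iteratedDeriv j ψ =ᶠ[nhds s]
        fun u => ∫ x in Ioi (0:ℝ), (-x) ^ j * Real.exp (-u * x) ∂μ := by
      filter_upwards [Ioi_mem_nhds hs] with u hu using ih u hu
    rw [heq.deriv_eq]
    exact (aux_hasDerivAt μ j hs).deriv

private lemma aux_ftc {a b : ℝ} (hab : a ≤ b) (f f' : ℝ → ℝ)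
    (hd : ∀ t ∈ Ioo a b, HasDerivAt f (f' t) t)
    (hfc : Continuous f) (hf'c : Continuous f') (x : ℝ) :
    ∫ s in Icc a b, Real.exp (-x * f s) * (-x * f' s)
      = Real.exp (-x * f b) - Real.exp (-x * f a) := by
  rw [MeasureTheory.integral_Icc_eq_integral_Ioc, ← intervalIntegral.integral_of_le hab]
  refine intervalIntegral.integral_eq_sub_of_hasDeriv_right_of_le hab
    (Continuous.continuousOn ((continuous_const.mul hfc).rexp)) (fun t ht => ?_) ?_
  · have h1 : HasDerivAt (fun s => Real.exp (-x * f s)) (Real.exp (-x * f t) * (-x * f' t)) t :=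
      ((hd t ht).const_mul (-x)).exp
    exact h1.hasDerivWithinAt
  · exact (Continuous.intervalIntegrable
      (((continuous_const.mul hfc).rexp).mul (continuous_const.mul hf'c)) a b)

private lemma aux_prod_box {m : ℕ} {a b : ℝ} (w : Fin m → ℝ → ℝ) :
    (∫ t in Set.univ.pi (fun _ : Fin m => Icc a b), ∏ k, w k (t k))
      = ∏ k, ∫ s in Icc a b, w k s := by
  have hbox : MeasurableSet (Set.univ.pi fun _ : Fin m => Icc a b) :=
    MeasurableSet.univ_pi fun _ => measurableSet_Icc
  rw [← MeasureTheory.integral_indicator hbox]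
  have key : ∀ t : Fin m → ℝ,
      (Set.univ.pi fun _ : Fin m => Icc a b).indicator (fun t => ∏ k, w k (t k)) t
        = ∏ k, (Icc a b).indicator (w k) (t k) := by
    intro t
    by_cases ht : t ∈ Set.univ.pi fun _ : Fin m => Icc a b
    · rw [indicator_of_mem ht]
      exact Finset.prod_congr rfl fun k _ => (indicator_of_mem (ht k (mem_univ k)) _).symm
    · rw [indicator_of_notMem ht]
      obtain ⟨k, hk⟩ : ∃ k, t k ∉ Icc a b := by
        by_contra hco
        push_neg at hco
        exact ht fun k _ => hco k
      exact (Finset.prod_eq_zero (Finset.mem_univ k) (indicator_of_notMem hk _)).symm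
  simp_rw [key]
  rw [volume_pi, MeasureTheory.integral_fintype_prod_eq_prod (fun k => (Icc a b).indicator (w k))]
  exact Finset.prod_congr rfl fun k _ => MeasureTheory.integral_indicator measurableSet_Icc

/-- Dimension reduction for multiple integrals against higher derivatives of a Laplace
transform: the `m`-fold integral over the box `[a,b]^m` of
`ψ⁽ⁿ⁺ᵐ⁾(c + Σ h_k(t_k)) · Π h_k'(t_k)` equals a single integral against `μ` in which
each coordinate contributes the factor `exp(-x·h_k(b)) - exp(-x·h_k(a))`. -/
theorem stmt_5 (μ : Measure ℝ) [IsFiniteMeasure μ]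
    (ψ : ℝ → ℝ)
    (hψ : ∀ t : ℝ, ψ t = ∫ x in Ioi (0:ℝ), Real.exp (-t * x) ∂μ)
    (n m : ℕ) (hm : 1 ≤ m) (c : ℝ) (hc : 0 < c) (a b : ℝ) (hab : a ≤ b)
    (h h' : Fin m → ℝ → ℝ)
    (hnonneg : ∀ k, ∀ t ∈ Icc a b, 0 ≤ h k t)
    (hderiv : ∀ k, ∀ t ∈ Icc a b, HasDerivWithinAt (h k) (h' k t) (Icc a b) t)
    (hcont : ∀ k, ContinuousOn (h' k) (Icc a b)) :
    ∫ t in Set.univ.pi (fun _ : Fin m => Icc a b),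
        iteratedDeriv (n + m) ψ (c + ∑ k, h k (t k)) * ∏ k, h' k (t k)
      = ∫ x in Ioi (0:ℝ),
          (-x) ^ n * Real.exp (-c * x) *
            ∏ k, (Real.exp (-x * h k b) - Real.exp (-x * h k a)) ∂μ := by
  classical
  have hHcont : ∀ k, ContinuousOn (h k) (Icc a b) :=
    fun k t ht => (hderiv k t ht).continuousWithinAt
  set g : Fin m → ℝ → ℝ := fun k => IccExtend hab (fun p : Icc a b => h k p) with hgdef
  set g' : Fin m → ℝ → ℝ := fun k => IccExtend hab (fun p : Icc a b => h' k p) with hg'def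
  have hg_eq : ∀ k, ∀ t ∈ Icc a b, g k t = h k t := by
    intro k t ht; simp [hgdef, IccExtend_of_mem hab _ ht]
  have hg'_eq : ∀ k, ∀ t ∈ Icc a b, g' k t = h' k t := by
    intro k t ht; simp [hg'def, IccExtend_of_mem hab _ ht]
  have hgc : ∀ k, Continuous (g k) :=
    fun k => Continuous.Icc_extend' (continuousOn_iff_continuous_restrict.mp (hHcont k))
  have hg'c : ∀ k, Continuous (g' k) :=
    fun k => Continuous.Icc_extend' (continuousOn_iff_continuous_restrict.mp (hcont k))
  have hgnn : ∀ k t, 0 ≤ g k t := by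
    intro k t
    rw [hgdef]
    exact hnonneg k _ (projIcc a b hab t).2
  choose M hM using fun k => (isCompact_Icc.exists_bound_of_continuousOn (hcont k))
  have hMnn : ∀ k, 0 ≤ M k :=
    fun k => le_trans (norm_nonneg _) (hM k a ⟨le_refl a, hab⟩)
  have hg'bd : ∀ k t, |g' k t| ≤ M k := by
    intro k t
    rw [hg'def]
    exact hM k _ (projIcc a b hab t).2
  have hgd : ∀ k, ∀ t ∈ Ioo a b, HasDerivAt (g k) (g' k t) t := by
    intro k t ht
    have hmemIcc : Icc a b ∈ nhds t := Icc_mem_nhds ht.1 ht.2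
    have hd : HasDerivAt (h k) (h' k t) t :=
      (hderiv k t (Ioo_subset_Icc_self ht)).hasDerivAt hmemIcc
    have heq : g k =ᶠ[nhds t] h k := by
      filter_upwards [hmemIcc] with u hu using hg_eq k u hu
    rw [hg'_eq k t (Ioo_subset_Icc_self ht)]
    exact hd.congr_of_eventuallyEq heq
  have hbox : MeasurableSet (Set.univ.pi fun _ : Fin m => Icc a b) :=
    MeasurableSet.univ_pi fun _ => measurableSet_Icc
  -- finiteness of the restricted box measure
  haveI hfin : IsFiniteMeasure
      ((volume : Measure (Fin m → ℝ)).restrict (Set.univ.pi fun _ : Fin m => Icc a b)) := by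
    constructor
    rw [Measure.restrict_apply_univ, volume_pi, Measure.pi_pi]
    refine ENNReal.prod_lt_top fun i _ => ?_
    simp [Real.volume_Icc]
  -- the kernel
  set K : (Fin m → ℝ) → ℝ → ℝ := fun t x =>
    (-x) ^ (n + m) * Real.exp (-(c + ∑ k, g k (t k)) * x) * ∏ k, g' k (t k) with hKdef
  have hKcont : Continuous (Function.uncurry K) := by
    have csum : Continuous fun p : (Fin m → ℝ) × ℝ => ∑ k, g k (p.1 k) :=
      continuous_finset_sum _ fun k _ => (hgc k).comp ((continuous_apply k).comp continuous_fst)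
    have cexp : Continuous fun p : (Fin m → ℝ) × ℝ =>
        Real.exp (-(c + ∑ k, g k (p.1 k)) * p.2) :=
      ((((continuous_const.add csum)).neg.mul continuous_snd)).rexp
    have cprod : Continuous fun p : (Fin m → ℝ) × ℝ => ∏ k, g' k (p.1 k) :=
      continuous_finset_prod _ fun k _ => (hg'c k).comp ((continuous_apply k).comp continuous_fst)
    exact ((continuous_snd.neg.pow (n + m)).mul cexp).mul cprod
  have hKint : Integrable (Function.uncurry K)
      (((volume : Measure (Fin m → ℝ)).restrict
          (Set.univ.pi fun _ : Fin m => Icc a b)).prod (μ.restrict (Ioi 0))) := by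
    rw [Measure.prod_restrict]
    haveI : IsFiniteMeasure (((volume : Measure (Fin m → ℝ)).prod μ).restrict
        ((Set.univ.pi fun _ : Fin m => Icc a b) ×ˢ Ioi 0)) := by
      constructor
      rw [Measure.restrict_apply_univ, Measure.prod_prod]
      refine ENNReal.mul_lt_top ?_ (measure_lt_top μ _)
      rw [volume_pi, Measure.pi_pi]
      refine ENNReal.prod_lt_top fun i _ => ?_
      simp [Real.volume_Icc]
    refine Integrable.mono'
      (integrable_const ((Nat.factorial (n + m) : ℝ) / c ^ (n + m) * ∏ k, M k))
      hKcont.aestronglyMeasurable ?_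
    filter_upwards [ae_restrict_mem (hbox.prod measurableSet_Ioi)] with p hp
    obtain ⟨hpt, hpx⟩ := hp
    set t := p.1
    set x := p.2
    have hx0 : (0:ℝ) < x := hpx
    have hS : (0:ℝ) ≤ ∑ k, g k (t k) := Finset.sum_nonneg fun k _ => hgnn k _
    have habs : ‖Function.uncurry K p‖
        = x ^ (n + m) * Real.exp (-(c + ∑ k, g k (t k)) * x) * |∏ k, g' k (t k)| := by
      simp only [Function.uncurry, hKdef, Real.norm_eq_abs, abs_mul, abs_pow, abs_neg,
        abs_of_nonneg hx0.le, abs_of_nonneg (show (0:ℝ) ≤ p.2 from hx0.le), abs_of_nonneg (Real.exp_nonneg _)]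
      rfl
    rw [habs]
    have h1 : x ^ (n + m) * Real.exp (-(c + ∑ k, g k (t k)) * x)
        ≤ (Nat.factorial (n + m) : ℝ) / c ^ (n + m) := by
      calc x ^ (n + m) * Real.exp (-(c + ∑ k, g k (t k)) * x)
          ≤ x ^ (n + m) * Real.exp (-(c * x)) := by
            apply mul_le_mul_of_nonneg_left _ (by positivity)
            apply Real.exp_le_exp.2
            nlinarith
        _ ≤ (Nat.factorial (n + m) : ℝ) / c ^ (n + m) := aux_pow_mul_exp_le _ hc hx0.le
    have h2 : |∏ k, g' k (t k)| ≤ ∏ k, M k := by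
      rw [Finset.abs_prod]
      exact Finset.prod_le_prod (fun k _ => abs_nonneg _) fun k _ => hg'bd k _
    exact mul_le_mul h1 h2 (abs_nonneg _) (by positivity)
  calc
    ∫ t in Set.univ.pi (fun _ : Fin m => Icc a b),
        iteratedDeriv (n + m) ψ (c + ∑ k, h k (t k)) * ∏ k, h' k (t k)
      = ∫ t in Set.univ.pi (fun _ : Fin m => Icc a b),
          ∫ x in Ioi (0:ℝ), K t x ∂μ := by
        refine setIntegral_congr_fun hbox fun t ht => ?_
        have htk : ∀ k, t k ∈ Icc a b := fun k => ht k (mem_univ k)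
        have hsum : (∑ k, h k (t k)) = ∑ k, g k (t k) :=
          Finset.sum_congr rfl fun k _ => (hg_eq k _ (htk k)).symm
        have hprod : (∏ k, h' k (t k)) = ∏ k, g' k (t k) :=
          Finset.prod_congr rfl fun k _ => (hg'_eq k _ (htk k)).symm
        have hpos : 0 < c + ∑ k, h k (t k) :=
          add_pos_of_pos_of_nonneg hc (Finset.sum_nonneg fun k _ => hnonneg k _ (htk k))
        rw [aux_iteratedDeriv μ ψ hψ (n + m) _ hpos, hsum, hprod, ← integral_mul_const]
    _ = ∫ x in Ioi (0:ℝ),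
          (∫ t in Set.univ.pi (fun _ : Fin m => Icc a b), K t x) ∂μ :=
        integral_integral_swap hKint
    _ = ∫ x in Ioi (0:ℝ),
          (-x) ^ n * Real.exp (-c * x) *
            ∏ k, (Real.exp (-x * h k b) - Real.exp (-x * h k a)) ∂μ := by
        refine setIntegral_congr_fun measurableSet_Ioi fun x _ => ?_
        have step1 : (∫ t in Set.univ.pi (fun _ : Fin m => Icc a b), K t x)
            = ∫ t in Set.univ.pi (fun _ : Fin m => Icc a b),
                ((-x) ^ n * Real.exp (-c * x)) *
                  ∏ k, (Real.exp (-x * g k (t k)) * (-x * g' k (t k))) := by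
          refine setIntegral_congr_fun hbox fun t _ => ?_
          have e2 : Real.exp (-(c + ∑ k, g k (t k)) * x)
              = Real.exp (-c * x) * ∏ k, Real.exp (-x * g k (t k)) := by
            rw [← Real.exp_sum, ← Real.exp_add]
            congr 1
            rw [← Finset.mul_sum]
            ring
          rw [hKdef]
          simp only [e2, Finset.prod_mul_distrib, pow_add]
          rw [show (∏ _k : Fin m, -x) = (-x) ^ m by
            rw [Finset.prod_const, Finset.card_univ, Fintype.card_fin]]
          ring
        rw [step1, integral_const_mul,
          aux_prod_box (fun k s => Real.exp (-x * g k s) * (-x * g' k s))]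
        congr 1
        refine Finset.prod_congr rfl fun k _ => ?_
        rw [aux_ftc hab (g k) (g' k) (hgd k) (hgc k) (hg'c k) x,
          hg_eq k b (right_mem_Icc.2 hab), hg_eq k a (left_mem_Icc.2 hab)]
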